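/- Let $p$ be an odd prime and suppose $G\le S_{p+1}$ is a subgroup which is solvable, primitive in its natural action on $\{1,\dots,p+1\}$, and contains a permutation that is a single cycle of length $p$ (fixing exactly one point). Then $p+1$ is a power of $2$, i.e., $p$ is a Mersenne prime. -/

import Mathlib

open Pointwise

/-- A subgroup of `Sₙ` is primitive if its natural action on `{1, …, n}` is transitive
and every block of the action is trivial (a subsingleton or everything). -/
def Subgroup.IsPrimitivePerm {n : ℕ} (G : Subgroup (Equiv.Perm (Fin n))) : Prop :=
  MulAction.IsPretransitive G (Fin n) ∧
    ∀ B : Set (Fin n), MulAction.IsBlock G B → B.Subsingleton ∨ B = Set.univ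

/-- In a solvable group, a "perfect" subgroup is trivial. -/
lemma aux_perfect_eq_bot {A : Type*} [Group A] [hs : Group.IsSolvable A] {N : Subgroup A}
    (h : ⁅N, N⁆ = N) : N = ⊥ := by
  obtain ⟨n, hn⟩ := hs.solvable
  have key : ∀ m, N ≤ derivedSeries A m := by
    intro m
    induction m with
    | zero => exact le_top
    | succ m ih =>
      rw [derivedSeries_succ, ← h]
      exact Subgroup.commutator_mono ih ih
  exact le_bot_iff.mp (hn ▸ key n)

set_option maxHeartbeats 1600000 in
/-- If an odd prime `p` admits a solvable primitive subgroup of `S_{p+1}` containing a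
single cycle of length `p`, then `p + 1` is a power of `2`, i.e. `p` is a Mersenne
prime. -/
theorem mersenne_of_solvable_primitive_with_p_cycle (p : ℕ) (hp : p.Prime)
    (hodd : Odd p) (G : Subgroup (Equiv.Perm (Fin (p + 1)))) (hsolv : IsSolvable G)
    (hprim : G.IsPrimitivePerm)
    (hcyc : ∃ σ : Equiv.Perm (Fin (p + 1)), σ ∈ G ∧ σ.IsCycle ∧ σ.support.card = p) :
    ∃ k : ℕ, p + 1 = 2 ^ k := by
  classical
  haveI : MulAction.IsPretransitive ↥G (Fin (p + 1)) := hprim.1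
  -- faithfulness of the action of G on Fin (p+1)
  have faithful : ∀ g : ↥G, (∀ x : Fin (p + 1), g • x = x) → g = 1 := by
    intro g hg
    have : (g : Equiv.Perm (Fin (p + 1))) = 1 := Equiv.ext fun x => hg x
    exact Subtype.ext this
  -- G is nontrivial
  obtain ⟨σ, hσG, hσc, hσcard⟩ := hcyc
  have hAnontriv : (⊤ : Subgroup ↥G) ≠ ⊥ := by
    intro h
    have : (⟨σ, hσG⟩ : ↥G) ∈ (⊥ : Subgroup ↥G) := h ▸ Subgroup.mem_top _
    rw [Subgroup.mem_bot] at this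
    exact hσc.ne_one (congrArg Subtype.val this)
  -- choose a minimal nontrivial normal subgroup N of G
  haveI : Finite (Subgroup ↥G) :=
    Finite.of_injective (fun K : Subgroup ↥G => (K : Set ↥G)) SetLike.coe_injective
  have hs_ne : ({K | K.Normal ∧ K ≠ ⊥} : Set (Subgroup ↥G)).Nonempty :=
    ⟨⊤, ⟨inferInstance, hAnontriv⟩⟩
  obtain ⟨N, ⟨hNnorm, hNbot⟩, hmin⟩ :=
    Set.Finite.exists_minimalFor (fun K : Subgroup ↥G => Nat.card K)
      {K | K.Normal ∧ K ≠ ⊥} (Set.toFinite _) hs_ne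
  haveI : N.Normal := hNnorm
  have hminimal : ∀ K : Subgroup ↥G, K.Normal → K ≠ ⊥ → K ≤ N → K = N := by
    intro K hKn hKb hKle
    have h1 : Nat.card K ≤ Nat.card N := Subgroup.card_le_of_le hKle
    have h2 := @hmin K ⟨hKn, hKb⟩ h1
    exact Subgroup.eq_of_le_of_card_ge hKle h2
  -- N is abelian
  have hcommbot : ⁅N, N⁆ = ⊥ := by
    by_contra hne
    have : ⁅N, N⁆ = N :=
      hminimal ⁅N, N⁆ (Subgroup.commutator_normal N N) hne (Subgroup.commutator_le_left N N)
    exact hNbot (aux_perfect_eq_bot (hs := hsolv) this)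
  have hcomm : ∀ x ∈ N, ∀ y ∈ N, x * y = y * x := by
    intro x hx y hy
    have hle := Subgroup.commutator_eq_bot_iff_le_centralizer.mp hcommbot
    have := hle hx
    rw [Subgroup.mem_centralizer_iff] at this
    exact (this y hy).symm
  -- the orbit of N is everything
  have a0 : Fin (p + 1) := ⟨0, Nat.succ_pos p⟩
  have horbit : ∀ a : Fin (p + 1), MulAction.orbit N a = Set.univ := by
    have key : ∀ a : Fin (p + 1), (MulAction.orbit N a).Subsingleton → False := by
      intro a hsub
      apply hNbot
      rw [eq_bot_iff]
      intro n hn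
      rw [Subgroup.mem_bot]
      apply faithful
      intro x
      obtain ⟨g, hg⟩ := MulAction.exists_smul_eq ↥G a x
      have horb : MulAction.orbit N x = g • MulAction.orbit N a := by
        rw [MulAction.smul_orbit_eq_orbit_smul, hg]
      have hsub' : (MulAction.orbit N x).Subsingleton := by
        rw [horb]
        exact hsub.image _
      have h1 : n • x ∈ MulAction.orbit N x := ⟨⟨n, hn⟩, rfl⟩
      exact hsub' h1 (MulAction.mem_orbit_self x)
    intro a
    rcases hprim.2 (MulAction.orbit N a) (MulAction.IsBlock.orbit_of_normal a) with h | h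
    · exact absurd h (key a)
    · exact h
  -- N acts simply transitively, so Nat.card N = p + 1
  have hbij : Function.Bijective (fun m : N => (m : ↥G) • a0) := by
    constructor
    · intro m m' hmm
      have hfix : ((m' : ↥G)⁻¹ * m) • a0 = a0 := by
        simp only at hmm
        rw [mul_smul, hmm, ← mul_smul, inv_mul_cancel, one_smul]
      have htriv : ∀ x : Fin (p + 1), ((m' : ↥G)⁻¹ * m) • x = x := by
        intro x
        have hx : x ∈ MulAction.orbit N a0 := by rw [horbit a0]; trivial
        obtain ⟨k, hk⟩ := hx
        have hcom : ((m' : ↥G)⁻¹ * (m : ↥G)) * (k : ↥G) =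
            (k : ↥G) * ((m' : ↥G)⁻¹ * (m : ↥G)) :=
          hcomm _ (N.mul_mem (N.inv_mem m'.2) m.2) _ k.2
        calc ((m' : ↥G)⁻¹ * (m : ↥G)) • x
            = ((m' : ↥G)⁻¹ * (m : ↥G)) • ((k : ↥G) • a0) := by rw [← hk]; rfl
          _ = (k : ↥G) • (((m' : ↥G)⁻¹ * (m : ↥G)) • a0) := by
              rw [← mul_smul, ← mul_smul, hcom]
          _ = (k : ↥G) • a0 := by rw [hfix]
          _ = x := by rw [← hk]; rfl
      have h1 : (m' : ↥G)⁻¹ * m = 1 := faithful _ htriv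
      have h2 : (m : ↥G) = (m' : ↥G) := by
        rw [← one_mul (m : ↥G), ← mul_inv_cancel (m' : ↥G), mul_assoc, h1, mul_one]
      exact Subtype.ext h2
    · intro x
      have hx : x ∈ MulAction.orbit N a0 := by rw [horbit a0]; trivial
      obtain ⟨k, hk⟩ := hx
      exact ⟨k, hk⟩
  have hcardN : Nat.card N = p + 1 := by
    rw [Nat.card_eq_of_bijective _ hbij]
    simp
  -- 2-torsion subgroup of N
  have h2dvd : 2 ∣ Nat.card N := by
    rw [hcardN]
    obtain ⟨m, hm⟩ := hodd
    exact ⟨m + 1, by omega⟩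
  haveI : Fact (Nat.Prime 2) := ⟨Nat.prime_two⟩
  haveI : Fintype ↥N := Fintype.ofFinite _
  obtain ⟨x, hx2⟩ := exists_prime_orderOf_dvd_card (G := ↥N) 2
    (by rwa [← Nat.card_eq_fintype_card])
  set T : Subgroup ↥G :=
    { carrier := {g : ↥G | g ∈ N ∧ g ^ 2 = 1}
      one_mem' := ⟨N.one_mem, one_pow 2⟩
      mul_mem' := by
        rintro g h ⟨hg, hg2⟩ ⟨hh, hh2⟩
        refine ⟨N.mul_mem hg hh, ?_⟩
        have hco : Commute g h := hcomm g hg h hh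
        rw [hco.mul_pow, hg2, hh2, mul_one]
      inv_mem' := by
        rintro g ⟨hg, hg2⟩
        exact ⟨N.inv_mem hg, by rw [inv_pow, hg2, inv_one]⟩ } with hT_def
  have hTnorm : T.Normal := by
    constructor
    rintro g ⟨hg, hg2⟩ c
    refine ⟨hNnorm.conj_mem g hg c, ?_⟩
    have hcp : (c * g * c⁻¹) ^ 2 = c * g ^ 2 * c⁻¹ := by
      simp [pow_two, mul_assoc]
    rw [hcp, hg2, mul_one, mul_inv_cancel]
  have hTne : T ≠ ⊥ := by
    intro hbot
    have hxT : (x : ↥G) ∈ T := by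
      refine ⟨x.2, ?_⟩
      have hxo : x ^ 2 = 1 := by rw [← hx2]; exact pow_orderOf_eq_one x
      have := congrArg (Subtype.val : N → ↥G) hxo
      simpa using this
    rw [hbot, Subgroup.mem_bot] at hxT
    have hx1 : x = (1 : N) := Subtype.ext hxT
    rw [hx1, orderOf_one] at hx2
    exact absurd hx2 (by norm_num)
  have hTle : T ≤ N := fun g hg => hg.1
  have hTN : T = N := hminimal T hTnorm hTne hTle
  -- N is an elementary abelian 2-group
  have hpg : IsPGroup 2 N := by
    intro g
    refine ⟨1, ?_⟩
    have hgT : (g : ↥G) ∈ T := hTN.symm ▸ g.2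
    have h2 : (g : ↥G) ^ 2 = 1 := hgT.2
    have h3 : g ^ 2 = 1 := Subtype.ext (by simpa using h2)
    simpa [pow_one] using h3
  obtain ⟨k, hk⟩ := IsPGroup.exists_card_eq hpg
  exact ⟨k, by rw [← hcardN, hk]⟩
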